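/- Let n, d be natural numbers. The ℂ-linear span of the set of d-th powers of linear forms, {(∑ᵢ vᵢ • Xᵢ)^d : v ∈ ℂⁿ}, inside MvPolynomial (Fin n) ℂ equals the submodule of all polynomials that are homogeneous of degree d. -/

import Mathlib

open Finset

-- inner alternating sum
lemma alt_sum_supersets {d : ℕ} (T : Finset (Fin d)) :
    ∑ S ∈ (Finset.univ : Finset (Fin d)).powerset.filter (fun S => T ⊆ S),
      (-1 : ℤ) ^ (d - S.card) = if T = Finset.univ then 1 else 0 := by
  have h : ∑ S ∈ (Finset.univ : Finset (Fin d)).powerset.filter (fun S => T ⊆ S),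
      (-1 : ℤ) ^ (d - S.card) = ∑ U ∈ Tᶜ.powerset, (-1 : ℤ) ^ U.card := by
    refine Finset.sum_nbij' (fun S => Sᶜ) (fun U => Uᶜ) ?_ ?_ ?_ ?_ ?_
    · intro S hS
      simp only [mem_filter, mem_powerset] at hS
      simp only [mem_powerset]
      exact compl_subset_compl.mpr hS.2
    · intro U hU
      simp only [mem_powerset] at hU
      simp only [mem_filter, mem_powerset]
      exact ⟨subset_univ _, by simpa using compl_subset_compl.mpr hU⟩
    · intro S _; simp
    · intro U _; simp
    · intro S hS
      rw [card_compl]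
      simp
  rw [h, Finset.sum_powerset_neg_one_pow_card]
  simp [compl_eq_empty_iff]

lemma polarization {R : Type*} [CommRing R] (d : ℕ) (y : Fin d → R) :
    ∑ S ∈ (Finset.univ : Finset (Fin d)).powerset,
      (-1 : ℤ) ^ (d - S.card) • (∑ j ∈ S, y j) ^ d = (d.factorial : ℕ) • ∏ j, y j := by
  have step1 : ∀ S : Finset (Fin d), (∑ j ∈ S, y j) ^ d
      = ∑ g ∈ Fintype.piFinset (fun _ : Fin d => S), ∏ j, y (g j) := by
    intro S
    rw [← Fin.prod_const d (∑ j ∈ S, y j), Finset.prod_univ_sum]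
  have step2 : ∀ S : Finset (Fin d),
      ∑ g ∈ Fintype.piFinset (fun _ : Fin d => S), ∏ j, y (g j)
      = ∑ g ∈ (Finset.univ : Finset (Fin d → Fin d)).filter
          (fun g => Finset.image g Finset.univ ⊆ S), ∏ j, y (g j) := by
    intro S
    refine Finset.sum_congr ?_ (fun _ _ => rfl)
    ext g
    simp [Fintype.mem_piFinset, Finset.image_subset_iff]
  calc ∑ S ∈ (Finset.univ : Finset (Fin d)).powerset,
      (-1 : ℤ) ^ (d - S.card) • (∑ j ∈ S, y j) ^ d
      = ∑ S ∈ (Finset.univ : Finset (Fin d)).powerset,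
        ∑ g ∈ (Finset.univ : Finset (Fin d → Fin d)).filter
          (fun g => Finset.image g Finset.univ ⊆ S),
          (-1 : ℤ) ^ (d - S.card) • ∏ j, y (g j) := by
        refine Finset.sum_congr rfl fun S _ => ?_
        rw [step1, step2, Finset.smul_sum]
    _ = ∑ g : Fin d → Fin d,
        ∑ S ∈ (Finset.univ : Finset (Fin d)).powerset.filter
          (fun S => Finset.image g Finset.univ ⊆ S),
          (-1 : ℤ) ^ (d - S.card) • ∏ j, y (g j) := by
        rw [Finset.sum_comm']
        intro S g
        simp only [Finset.mem_powerset, Finset.subset_univ, Finset.mem_filter,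
          Finset.mem_univ, true_and, and_true]
    _ = ∑ g : Fin d → Fin d,
        (∑ S ∈ (Finset.univ : Finset (Fin d)).powerset.filter
          (fun S => Finset.image g Finset.univ ⊆ S),
          (-1 : ℤ) ^ (d - S.card)) • ∏ j, y (g j) := by
        simp [Finset.sum_smul]
    _ = ∑ g ∈ (Finset.univ : Finset (Fin d → Fin d)).filter
          (fun g => Finset.image g Finset.univ = Finset.univ), ∏ j, y (g j) := by
        simp only [alt_sum_supersets]
        rw [Finset.sum_filter]
        refine Finset.sum_congr rfl fun g _ => ?_
        by_cases h : Finset.image g Finset.univ = Finset.univ <;> simp [h]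
    _ = ∑ σ : Equiv.Perm (Fin d), ∏ j, y (σ j) := by
        have hbij : ∀ g : Fin d → Fin d, Finset.image g Finset.univ = Finset.univ →
            Function.Bijective g := by
          intro g h
          refine Function.Surjective.bijective_of_finite (fun b => ?_)
          have hb : b ∈ Finset.image g Finset.univ := by rw [h]; exact Finset.mem_univ b
          simpa using hb
        refine (Finset.sum_bij' (fun (σ : Equiv.Perm (Fin d)) _ => (σ : Fin d → Fin d))
          (fun g hg => Equiv.ofBijective g (hbij g (by simpa using hg)))
          ?_ ?_ ?_ ?_ ?_).symm
        · intro σ _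
          simp [Finset.mem_filter, Finset.eq_univ_iff_forall, σ.surjective.exists.mpr]
          intro b
          exact ⟨σ.symm b, by simp⟩
        · intro g hg
          exact Finset.mem_univ _
        · intro σ _
          ext x
          simp [Equiv.ofBijective]
        · intro g hg
          rfl
        · intro σ _
          rfl
    _ = (d.factorial : ℕ) • ∏ j, y j := by
        simp only [fun σ : Equiv.Perm (Fin d) => Equiv.prod_comp σ y]
        rw [Finset.sum_const, Finset.card_univ, Fintype.card_perm, Fintype.card_fin]

open MvPolynomial

lemma prod_toMultiset_map {α M : Type*} [CommMonoid M] (f : α →₀ ℕ) (g : α → M) :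
    (f.toMultiset.map g).prod = f.prod fun a n => g a ^ n := by
  refine f.induction ?_ ?_
  · simp
  · intro a n f han hn ih
    rw [Finsupp.toMultiset_add, Multiset.map_add, Multiset.prod_add, ih,
      Finsupp.toMultiset_single,
      Finsupp.prod_add_index' (fun _ => pow_zero _) (fun _ _ _ => pow_add _ _ _)]
    congr 1
    rw [Multiset.map_nsmul, Multiset.map_singleton, Multiset.prod_nsmul,
      Multiset.prod_singleton, Finsupp.prod_single_index (h := fun x k => g x ^ k) (pow_zero _)]

/-- The ℂ-linear span of the `d`-th powers of linear forms
`{(∑ᵢ vᵢ • Xᵢ)^d : v ∈ ℂⁿ}` inside `MvPolynomial (Fin n) ℂ` is the submodule of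
polynomials homogeneous of degree `d` (non-degeneracy of the Veronese embedding). -/
theorem span_pow_linear_forms_eq_homogeneousSubmodule (n d : ℕ) :
    Submodule.span ℂ
      {p : MvPolynomial (Fin n) ℂ |
        ∃ v : Fin n → ℂ, p = (∑ i, v i • (X i : MvPolynomial (Fin n) ℂ)) ^ d} =
      MvPolynomial.homogeneousSubmodule (Fin n) ℂ d := by
  apply le_antisymm
  · rw [Submodule.span_le]
    rintro p ⟨v, rfl⟩
    rw [SetLike.mem_coe, mem_homogeneousSubmodule]
    have h1 : (∑ i, v i • (X i : MvPolynomial (Fin n) ℂ)).IsHomogeneous 1 := by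
      refine IsHomogeneous.sum _ _ _ fun i _ => ?_
      rw [smul_eq_C_mul]
      exact (isHomogeneous_X ℂ i).C_mul _
    simpa using h1.pow d
  · -- key: every monomial of degree d is in the span
    set W := Submodule.span ℂ
      {p : MvPolynomial (Fin n) ℂ |
        ∃ v : Fin n → ℂ, p = (∑ i, v i • (X i : MvPolynomial (Fin n) ℂ)) ^ d} with hW
    have key : ∀ α : Fin n →₀ ℕ, (α.sum fun _ e => e) = d →
        (monomial α (1 : ℂ) : MvPolynomial (Fin n) ℂ) ∈ W := by
      intro α hα
      set l : List (Fin n) := α.toMultiset.toList with hl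
      have hlen : l.length = d := by
        rw [hl, Multiset.length_toList, Finsupp.card_toMultiset]
        exact hα
      set f : Fin n → ℂ := fun _ => 0 with hf0  -- dummy
      clear hf0 f
      set y : Fin d → Fin n := fun j => l.get (Fin.cast hlen.symm j) with hy
      -- the product of X's is the monomial
      have hprod : (∏ j : Fin d, (X (y j) : MvPolynomial (Fin n) ℂ)) = monomial α 1 := by
        have h1 : (∏ j : Fin d, (X (y j) : MvPolynomial (Fin n) ℂ))
            = ∏ i : Fin l.length, (X (l.get i) : MvPolynomial (Fin n) ℂ) :=
          (Fintype.prod_equiv (finCongr hlen.symm) _ _ (fun j => rfl))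
        rw [h1]
        have h2 : (∏ i : Fin l.length, (X (l.get i) : MvPolynomial (Fin n) ℂ))
            = (l.map X).prod := by
          rw [← Fin.prod_univ_fun_getElem l X]
          rfl
        rw [h2]
        have h3 : (l.map (X : Fin n → MvPolynomial (Fin n) ℂ)).prod
            = (α.toMultiset.map X).prod := by
          rw [hl, ← Multiset.prod_coe, ← Multiset.map_coe, Multiset.coe_toList]
        rw [h3, prod_toMultiset_map]
        rw [← prod_X_pow_eq_monomial]
        rfl
      -- each power of subset-sum of X's is a generator
      have hgen : ∀ S : Finset (Fin d),
          ((∑ j ∈ S, (X (y j) : MvPolynomial (Fin n) ℂ)) ^ d) ∈ W := by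
        intro S
        apply Submodule.subset_span
        refine ⟨fun i => ((S.filter fun j => y j = i).card : ℂ), ?_⟩
        congr 1
        rw [← Finset.sum_fiberwise_of_maps_to (g := y) (t := Finset.univ)
          (fun j _ => Finset.mem_univ (y j))]
        refine Finset.sum_congr rfl fun i _ => ?_
        calc ∑ j ∈ S.filter fun j => y j = i, (X (y j) : MvPolynomial (Fin n) ℂ)
            = ∑ _j ∈ S.filter fun j => y j = i, (X i : MvPolynomial (Fin n) ℂ) :=
              Finset.sum_congr rfl fun j hj => by rw [(Finset.mem_filter.mp hj).2]
          _ = _ := by rw [Finset.sum_const, ← Nat.cast_smul_eq_nsmul ℂ]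
      -- apply polarization
      have hp := polarization d (fun j => (X (y j) : MvPolynomial (Fin n) ℂ))
      rw [hprod] at hp
      have hmem : (d.factorial : ℕ) • (monomial α (1 : ℂ) : MvPolynomial (Fin n) ℂ) ∈ W := by
        rw [← hp]
        refine Submodule.sum_mem _ fun S _ => ?_
        rw [← Int.cast_smul_eq_zsmul ℂ]
        exact Submodule.smul_mem _ _ (hgen S)
      rw [← Nat.cast_smul_eq_nsmul ℂ] at hmem
      have := Submodule.smul_mem W ((d.factorial : ℂ))⁻¹ hmem
      rwa [smul_smul, inv_mul_cancel₀ (by exact_mod_cast Nat.factorial_ne_zero d), one_smul]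
        at this
    intro p hp
    rw [mem_homogeneousSubmodule] at hp
    rw [p.as_sum]
    refine Submodule.sum_mem _ fun α hα => ?_
    have hdeg : (α.sum fun _ e => e) = d := by
      have := hp (MvPolynomial.mem_support_iff.mp hα)
      simpa [Finsupp.weight, Finsupp.linearCombination, Finsupp.sum] using this
    have : (monomial α (coeff α p) : MvPolynomial (Fin n) ℂ)
        = coeff α p • monomial α 1 := by
      rw [smul_monomial, smul_eq_mul, mul_one]
    rw [this]
    exact Submodule.smul_mem _ _ (key α hdeg)
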